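/- Let X be a Peano continuum, (A, F) a topological fractal with A ⊆ X, and U ⊊ A a nonempty open set such that (i) all maps in F are constant on A \ U, and (ii) there exist Peano continua P₁,…,Pₙ with X \ A ⊆ ⋃ᵢ Pᵢ ⊆ X \ U. Then X is the underlying space of some topological fractal. -/

import Mathlib

open Set

/-- Composition of a list of self-maps. -/
def Comp {X : Type*} (l : List (X → X)) : X → X := l.foldr (· ∘ ·) id

/-- `F` is a topologically contracting system on `Y ⊆ X`. -/
def TopContracting {X : Type*} [TopologicalSpace X] (F : Set (X → X)) (Y : Set X) : Prop :=
  ∀ 𝒰 : Set (Set X), (∀ U ∈ 𝒰, IsOpen U) → Y ⊆ ⋃₀ 𝒰 →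
    ∃ n : ℕ, ∀ l : List (X → X), l.length = n → (∀ f ∈ l, f ∈ F) →
      ∃ U ∈ 𝒰, Comp l '' Y ⊆ U

/-- `(Y, F)` is a topological fractal, where `Y` is a compact subset of an ambient space. -/
def TopFractalOn {X : Type*} [TopologicalSpace X] (F : Set (X → X)) (Y : Set X) : Prop :=
  IsCompact Y ∧ F.Finite ∧ (∀ f ∈ F, ContinuousOn f Y ∧ f '' Y ⊆ Y) ∧
    (⋃ f ∈ F, f '' Y) = Y ∧ TopContracting F Y

/-- `(X, F)` is a topological fractal (whole-space version). -/
def TopFractal {X : Type*} [TopologicalSpace X] (F : Set (X → X)) : Prop :=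
  F.Finite ∧ (∀ f ∈ F, Continuous f) ∧ (⋃ f ∈ F, Set.range f) = Set.univ ∧
    TopContracting F Set.univ

/-- `S` is a Peano continuum as a subspace. -/
def IsPeanoOn {X : Type*} [TopologicalSpace X] (S : Set X) : Prop :=
  IsCompact S ∧ IsConnected S ∧ LocallyConnectedSpace S


section

section Chains
variable {Q : Type*} [MetricSpace Q]

/-- A finite chain from `a` to `b` inside `S` with mesh `< η`. -/
def ChainIn (η : ℝ) (S : Set Q) (a b : Q) (l : List Q) : Prop :=
  l ≠ [] ∧ l.head? = some a ∧ l.getLast? = some b ∧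
    l.IsChain (fun x y => dist x y < η) ∧ ∀ x ∈ l, x ∈ S

lemma chainIn_singleton {η : ℝ} {S : Set Q} {a : Q} (ha : a ∈ S) :
    ChainIn η S a a [a] := by
  refine ⟨by simp, by simp, by simp, by simp, by simpa⟩

lemma ChainIn.mono {η : ℝ} {S S' : Set Q} {a b : Q} {l : List Q} (hS : S ⊆ S')
    (h : ChainIn η S a b l) : ChainIn η S' a b l :=
  ⟨h.1, h.2.1, h.2.2.1, h.2.2.2.1, fun x hx => hS (h.2.2.2.2 x hx)⟩

lemma ChainIn.append {η : ℝ} (hη : 0 < η) {S : Set Q} {a b d : Q} {l₁ l₂ : List Q}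
    (h₁ : ChainIn η S a b l₁) (h₂ : ChainIn η S b d l₂) :
    ChainIn η S a d (l₁ ++ l₂) := by
  obtain ⟨hne₁, hh₁, hl₁, hc₁, hm₁⟩ := h₁
  obtain ⟨hne₂, hh₂, hl₂, hc₂, hm₂⟩ := h₂
  refine ⟨by simp [hne₁], ?_, ?_, ?_, ?_⟩
  · rw [List.head?_append_of_ne_nil] <;> simp [hh₁, hne₁]
  · rw [List.getLast?_append_of_ne_nil (l₁ := l₁) hne₂]; exact hl₂
  · refine List.IsChain.append hc₁ hc₂ ?_
    intro x hx y hy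
    rw [hl₁] at hx; rw [hh₂] at hy
    simp only [Option.mem_def, Option.some.injEq] at hx hy
    subst hx; subst hy; simpa using hη
  · intro x hx
    rcases List.mem_append.1 hx with h | h
    · exact hm₁ x h
    · exact hm₂ x h

lemma ChainIn.reverse {η : ℝ} {S : Set Q} {a b : Q} {l : List Q}
    (h : ChainIn η S a b l) : ChainIn η S b a l.reverse := by
  obtain ⟨hne, hh, hl, hc, hm⟩ := h
  refine ⟨by simpa using hne, ?_, ?_, ?_, ?_⟩
  · rw [List.head?_reverse]; exact hl
  · rw [List.getLast?_reverse]; exact hh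
  · rw [List.isChain_reverse]
    exact hc.imp (fun x y h => by rw [dist_comm]; exact h)
  · intro x hx; exact hm x (by simpa using hx)

lemma IsPreconnected.chainIn {S : Set Q} (hS : IsPreconnected S) {a b : Q}
    (ha : a ∈ S) (hb : b ∈ S) {η : ℝ} (hη : 0 < η) :
    ∃ l, ChainIn η S a b l := by
  classical
  set T : Set Q := {y | y ∈ S ∧ ∃ l, ChainIn η S a y l} with hT
  by_contra hcon
  have hbT : b ∉ T := fun h => hcon h.2
  have haT : a ∈ T := ⟨ha, [a], chainIn_singleton ha⟩
  -- extension property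
  have hext : ∀ y ∈ T, ∀ z ∈ S, dist y z < η → z ∈ T := by
    rintro y ⟨hyS, l, hl⟩ z hzS hdist
    obtain ⟨hne, hh, hlast, hch, hmem⟩ := hl
    refine ⟨hzS, l ++ [z], ⟨by simp, ?_, ?_, ?_, ?_⟩⟩
    · rw [List.head?_append_of_ne_nil] <;> simp [hh, hne]
    · rw [List.getLast?_append_of_ne_nil (l₁ := l) (by simp)]; simp
    · refine List.IsChain.append hch (by simp) ?_
      intro p hp q hq
      rw [hlast] at hp
      simp only [Option.mem_def, Option.some.injEq, List.head?_cons] at hp hq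
      subst hp; subst hq; exact hdist
    · intro x hx
      rcases List.mem_append.1 hx with h | h
      · exact hmem x h
      · simp only [List.mem_singleton] at h; subst h; exact hzS
  set u : Set Q := ⋃ y ∈ T, Metric.ball y η
  set w : Set Q := ⋃ y ∈ S \ T, Metric.ball y η
  have hu : IsOpen u := isOpen_biUnion (fun _ _ => Metric.isOpen_ball)
  have hw : IsOpen w := isOpen_biUnion (fun _ _ => Metric.isOpen_ball)
  have hSuw : S ⊆ u ∪ w := by
    intro y hy
    by_cases hyT : y ∈ T
    · exact Or.inl (mem_biUnion hyT (Metric.mem_ball_self hη))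
    · exact Or.inr (mem_biUnion ⟨hy, hyT⟩ (Metric.mem_ball_self hη))
  have h1 : (S ∩ u).Nonempty := ⟨a, ha, mem_biUnion haT (Metric.mem_ball_self hη)⟩
  have h2 : (S ∩ w).Nonempty := ⟨b, hb, mem_biUnion ⟨hb, hbT⟩ (Metric.mem_ball_self hη)⟩
  obtain ⟨x, hxS, hxu, hxw⟩ := hS u w hu hw hSuw h1 h2
  obtain ⟨y, hyT, hxy⟩ : ∃ y ∈ T, dist x y < η := by
    simpa [u, Metric.mem_ball] using hxu
  obtain ⟨y', ⟨hy'S, hy'T⟩, hxy'⟩ : ∃ y' ∈ S \ T, dist x y' < η := by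
    simpa [w, Metric.mem_ball] using hxw
  have hxT : x ∈ T := hext y hyT x hxS (by rw [dist_comm]; exact hxy)
  exact hy'T (hext x hxT y' hy'S hxy')

lemma exists_good_delta [CompactSpace Q] [LocallyConnectedSpace Q] [Nonempty Q] {ε : ℝ} (hε : 0 < ε) :
    ∃ δ > 0, ∀ a b : Q, dist a b < δ → ∀ η > 0, ∃ l, ChainIn η (Metric.closedBall a ε) a b l := by
  have hV : ∀ x : Q, ∃ V : Set Q, (IsOpen V ∧ x ∈ V ∧ IsConnected V) ∧ V ⊆ Metric.ball x (ε/2) := by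
    intro x
    have hmem : Metric.ball x (ε/2) ∈ nhds x := Metric.ball_mem_nhds x (half_pos hε)
    have := (LocallyConnectedSpace.open_connected_basis x).mem_iff.mp hmem
    simpa using this
  choose V hV hVsub using hV
  obtain ⟨δ, hδ, hball⟩ := lebesgue_number_lemma_of_metric isCompact_univ
    (fun x => (hV x).1) (fun x _ => mem_iUnion.2 ⟨x, (hV x).2.1⟩)
  refine ⟨δ, hδ, fun a b hab η hη => ?_⟩
  obtain ⟨x, hx⟩ := hball a (mem_univ a)
  have haV : a ∈ V x := hx (Metric.mem_ball_self hδ)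
  have hbV : b ∈ V x := hx (Metric.mem_ball.2 (by rw [dist_comm]; exact hab))
  have hsub : V x ⊆ Metric.closedBall a ε := by
    intro y hy
    have h1 := hVsub x hy
    have h2 := hVsub x haV
    simp only [Metric.mem_ball] at h1 h2
    simp only [Metric.mem_closedBall]
    have := dist_triangle y x a
    rw [dist_comm x a] at this
    linarith
  obtain ⟨l, hl⟩ := (hV x).2.2.isPreconnected.chainIn haV hbV hη
  exact ⟨l, hl.mono hsub⟩

end Chains

section StepLemma
variable {Q : Type*} [MetricSpace Q]

lemma getD_lt {l : List Q} {n : ℕ} {d : Q} (h : n < l.length) : l.getD n d = l[n] := by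
  rw [List.getD_eq_getElem?_getD, List.getElem?_eq_getElem h]; rfl

lemma getD_ge {l : List Q} {n : ℕ} {d : Q} (h : l.length ≤ n) : l.getD n d = d := by
  rw [List.getD_eq_getElem?_getD, List.getElem?_eq_none h]; rfl

lemma detours_exist {η : ℝ} (hη : 0 < η) {S : Set Q} {c : Q} (hc : c ∈ S)
    (ws : List Q) (h : ∀ w ∈ ws, ∃ l, ChainIn η S c c l ∧ w ∈ l) :
    ∃ l, ChainIn η S c c l ∧ ∀ w ∈ ws, w ∈ l := by
  induction ws with
  | nil => exact ⟨[c], chainIn_singleton hc, by simp⟩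
  | cons w ws ih =>
    obtain ⟨l₁, hl₁, hwl₁⟩ := h w (by simp)
    obtain ⟨l₂, hl₂, hmem⟩ := ih (fun w' hw' => h w' (by simp [hw']))
    refine ⟨l₁ ++ l₂, hl₁.append hη hl₂, ?_⟩
    intro w' hw'
    rcases List.mem_cons.1 hw' with rfl | hw'
    · exact List.mem_append.2 (Or.inl hwl₁)
    · exact List.mem_append.2 (Or.inr (hmem w' hw'))

lemma step_lemma {η Bn δn ρn : ℝ} (hη : 0 < η) (hBn : 0 ≤ Bn) (hδn : 0 < δn)
    (N : ℕ) (v : ℕ → Q) (hN : 0 < N)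
    (hmesh : ∀ i, dist (v i) (v (i + 1)) < δn)
    (htail : ∀ i, N ≤ i → v i = v N)
    (hdens : ∀ p : Q, ∃ j ≤ N, dist p (v j) < ρn)
    (hmain : ∀ a b : Q, dist a b < δn → ∃ l, ChainIn η (Metric.closedBall a Bn) a b l)
    (hdet : ∀ c w : Q, dist w c < ρn → ∃ l, ChainIn η (Metric.closedBall c Bn) c c l ∧ w ∈ l)
    (net : List Q) (hnet : ∀ p : Q, ∃ w ∈ net, dist p w < η) :
    ∃ M : ℕ, 0 < M ∧ ∃ v' : ℕ → Q,
      (∀ i, dist (v' i) (v' (i + 1)) < η) ∧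
      (∀ i, N * M ≤ i → v' i = v' (N * M)) ∧
      (∀ j, v' (j * M) = v j) ∧
      (∀ i, dist (v' i) (v (i / M)) ≤ Bn + δn) ∧
      (∀ p : Q, ∃ j ≤ N * M, dist p (v' j) < η) := by
  classical
  choose att hattle hattdist using hdens
  have hball₁ : ∀ j : ℕ, Metric.closedBall (v j) Bn ⊆ Metric.closedBall (v j) (Bn + δn) :=
    fun j => Metric.closedBall_subset_closedBall (by linarith)
  have hball₂ : ∀ j : ℕ, Metric.closedBall (v (j + 1)) Bn ⊆ Metric.closedBall (v j) (Bn + δn) := by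
    intro j x hx
    simp only [Metric.mem_closedBall] at hx ⊢
    have h1 := (hmesh j).le
    have h2 := dist_triangle x (v (j + 1)) (v j)
    rw [dist_comm (v (j+1)) (v j)] at h2
    linarith
  have hseg : ∀ j : ℕ, ∃ l : List Q,
      ChainIn η (Metric.closedBall (v j) (Bn + δn)) (v j) (v (j + 1)) l ∧
      (j < N → ∀ w ∈ net, att w = j → w ∈ l) ∧
      (j + 1 = N → ∀ w ∈ net, att w = N → w ∈ l) := by
    intro j
    by_cases hjN : j < N
    · obtain ⟨l₁, hl₁, hm₁⟩ := detours_exist hη (Metric.mem_closedBall_self hBn)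
        (net.filter (fun w => att w = j))
        (fun w hw => by
          have hw' : att w = j := by simpa using (List.mem_filter.1 hw).2
          exact hdet (v j) w (hw' ▸ hattdist w))
      obtain ⟨l₂, hl₂⟩ := hmain (v j) (v (j + 1)) (hmesh j)
      by_cases hj1 : j + 1 = N
      · obtain ⟨l₃, hl₃, hm₃⟩ := detours_exist hη
          (S := Metric.closedBall (v (j + 1)) Bn) (c := v (j + 1))
          (Metric.mem_closedBall_self hBn)
          (net.filter (fun w => att w = N))
          (fun w hw => by
            have hw' : att w = N := by simpa using (List.mem_filter.1 hw).2
            have hveq : v (j + 1) = v N := by rw [hj1]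
            rw [hveq]
            exact hdet (v N) w (hw' ▸ hattdist w))
        refine ⟨l₁ ++ l₂ ++ l₃, ?_, ?_, ?_⟩
        · exact ((hl₁.mono (hball₁ j)).append hη (hl₂.mono (hball₁ j))).append hη
            (hl₃.mono (hball₂ j))
        · intro _ w hw hattw
          exact List.mem_append.2 (Or.inl (List.mem_append.2 (Or.inl
            (hm₁ w (List.mem_filter.2 ⟨hw, by simp [hattw]⟩)))))
        · intro _ w hw hattw
          exact List.mem_append.2 (Or.inr (hm₃ w (List.mem_filter.2 ⟨hw, by simp [hattw]⟩)))
      · refine ⟨l₁ ++ l₂, (hl₁.mono (hball₁ j)).append hη (hl₂.mono (hball₁ j)), ?_, ?_⟩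
        · intro _ w hw hattw
          exact List.mem_append.2 (Or.inl (hm₁ w (List.mem_filter.2 ⟨hw, by simp [hattw]⟩)))
        · intro h; exact absurd h hj1
    · push_neg at hjN
      have h1 : v j = v N := htail j hjN
      have h2 : v (j + 1) = v N := htail (j + 1) (by omega)
      refine ⟨[v N], ?_, ?_, ?_⟩
      · rw [h1, h2]
        exact chainIn_singleton (Metric.mem_closedBall_self (by linarith))
      · intro h; omega
      · intro h; omega
  choose L hL hmemL hmemR using hseg
  set M : ℕ := (Finset.range N).sup (fun j => (L j).length) + 1 with hM_def
  have hM : 0 < M := Nat.succ_pos _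
  have hlen : ∀ j, j < N → (L j).length ≤ M := by
    intro j hj
    rw [hM_def]
    exact le_trans (Finset.le_sup (f := fun j => (L j).length) (Finset.mem_range.2 hj))
      (Nat.le_add_right _ 1)
  set av : ℕ → ℕ → Q := fun j r => (L j).getD r (v (j + 1)) with hav_def
  have hLne : ∀ j, (L j) ≠ [] := fun j => (hL j).1
  have hLlen : ∀ j, 0 < (L j).length := fun j => List.length_pos_iff.2 (hLne j)
  have hav0 : ∀ j, av j 0 = v j := by
    intro j
    have := (hL j).2.1
    rw [List.head?_eq_getElem?, List.getElem?_eq_getElem (hLlen j)] at this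
    simp only [Option.some.injEq] at this
    rw [hav_def]; simp only []
    rw [getD_lt (hLlen j), this]
  have havLast : ∀ j r, (L j).length ≤ r + 1 → av j r = v (j + 1) := by
    intro j r hr
    rcases lt_or_ge r (L j).length with h | h
    · have hr' : r = (L j).length - 1 := by omega
      have hlast := (hL j).2.2.1
      rw [List.getLast?_eq_getElem?, List.getElem?_eq_getElem (by omega)] at hlast
      simp only [Option.some.injEq] at hlast
      rw [hav_def]; simp only []
      rw [getD_lt h]
      subst hr'
      exact hlast
    · rw [hav_def]; simp only []
      exact getD_ge h
  have havchain : ∀ j r, dist (av j r) (av j (r + 1)) < η := by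
    intro j r
    rcases lt_or_ge (r + 1) (L j).length with h | h
    · have hch := (hL j).2.2.2.1
      have := List.isChain_iff_getElem.1 hch r (by omega)
      rw [hav_def]; simp only []
      rw [getD_lt (by omega), getD_lt h]
      simpa [List.get_eq_getElem] using this
    · rw [havLast j r (by omega), havLast j (r + 1) (by omega)]
      simpa using hη
  have havmem : ∀ j r, dist (v j) (av j r) ≤ Bn + δn := by
    intro j r
    rcases lt_or_ge r (L j).length with h | h
    · have hmem := (hL j).2.2.2.2 _ (List.getElem_mem h)
      rw [hav_def]; simp only []
      rw [getD_lt h]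
      simpa [Metric.mem_closedBall, dist_comm] using hmem
    · rw [havLast j r (by omega)]
      have := (hmesh j).le
      linarith
  refine ⟨M, hM, fun i => if i / M < N then av (i / M) (i % M) else v N, ?_, ?_, ?_, ?_, ?_⟩
  · -- mesh
    intro i
    have hidecomp : M * (i / M) + i % M = i := Nat.div_add_mod i M
    set j := i / M with hj
    set r := i % M with hr
    have hrM : r < M := Nat.mod_lt _ hM
    rcases lt_or_ge (r + 1) M with hcase | hcase
    · have hd : (i + 1) / M = j := by
        rw [show i + 1 = M * j + (r + 1) by omega, Nat.mul_add_div hM, Nat.div_eq_of_lt hcase]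
        omega
      have hm : (i + 1) % M = r + 1 := by
        rw [show i + 1 = M * j + (r + 1) by omega, Nat.mul_add_mod, Nat.mod_eq_of_lt hcase]
      simp only [hd, hm]
      simp only [← hj, ← hr]
      by_cases hjN : j < N
      · simp only [if_pos hjN]; exact havchain j r
      · simp only [if_neg hjN]; simpa using hη
    · have hrM1 : r + 1 = M := by omega
      have hexp : M * (j + 1) = M * j + M := by ring
      have hd : (i + 1) / M = j + 1 := by
        rw [show i + 1 = M * (j + 1) by omega, Nat.mul_div_cancel_left _ hM]
      have hm : (i + 1) % M = 0 := by
        rw [show i + 1 = M * (j + 1) by omega, Nat.mul_mod_right]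
      simp only [hd, hm]
      simp only [← hj, ← hr]
      by_cases hjN : j < N
      · have havr : av j r = v (j + 1) := havLast j r (by have := hlen j hjN; omega)
        simp only [if_pos hjN, havr]
        by_cases hj1 : j + 1 < N
        · simp only [if_pos hj1, hav0 (j + 1)]; simpa using hη
        · simp only [if_neg hj1]
          have : v (j + 1) = v N := htail (j + 1) (by omega)
          rw [this]; simpa using hη
      · simp only [if_neg hjN]
        have hj1 : ¬ (j + 1 < N) := by omega
        simp only [if_neg hj1]; simpa using hη
  · -- tail
    intro i hi
    have h1 : ¬ (i / M < N) := by
      rw [not_lt, Nat.le_div_iff_mul_le hM]; exact hi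
    have h2 : ¬ (N * M / M < N) := by
      rw [not_lt, Nat.mul_div_cancel _ hM]
    simp only [if_neg h1, if_neg h2]
  · -- grid
    intro j
    have hd : j * M / M = j := Nat.mul_div_cancel _ hM
    have hm : j * M % M = 0 := Nat.mul_mod_left _ _
    simp only [hd, hm]
    by_cases hjN : j < N
    · simp only [if_pos hjN]; exact hav0 j
    · simp only [if_neg hjN]; exact (htail j (by omega)).symm
  · -- close
    intro i
    by_cases hjN : i / M < N
    · simp only [if_pos hjN]
      rw [dist_comm]; exact havmem _ _
    · simp only [if_neg hjN]
      rw [htail (i / M) (by omega)]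
      simp only [dist_self]
      have := hδn.le; linarith
  · -- density
    intro p
    obtain ⟨w, hwnet, hpw⟩ := hnet p
    have hwattle := hattle w
    have hin : ∃ j₀, j₀ < N ∧ w ∈ L j₀ := by
      rcases lt_or_eq_of_le hwattle with h | h
      · exact ⟨att w, h, hmemL (att w) h w hwnet rfl⟩
      · exact ⟨N - 1, by omega, hmemR (N - 1) (by omega) w hwnet h⟩
    obtain ⟨j₀, hj₀, hwL⟩ := hin
    obtain ⟨r, hrlen, hrw⟩ := List.mem_iff_getElem.1 hwL
    have hrM : r < M := lt_of_lt_of_le hrlen (hlen j₀ hj₀)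
    refine ⟨j₀ * M + r, ?_, ?_⟩
    · have : j₀ * M + r < (j₀ + 1) * M := by
        rw [add_mul, one_mul]; omega
      have : j₀ * M + r < N * M := lt_of_lt_of_le this (Nat.mul_le_mul_right M hj₀)
      omega
    · have hd : (j₀ * M + r) / M = j₀ := by
        rw [show j₀ * M + r = M * j₀ + r by ring, Nat.mul_add_div hM, Nat.div_eq_of_lt hrM]
        omega
      have hm : (j₀ * M + r) % M = r := by
        rw [show j₀ * M + r = M * j₀ + r by ring, Nat.mul_add_mod, Nat.mod_eq_of_lt hrM]
      simp only [hd, hm, if_pos hj₀]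
      rw [hav_def]; simp only []
      rw [getD_lt hrlen, hrw]
      exact hpw

end StepLemma

section Peano
open Filter Topology

theorem peano_surj (Q : Type*) [MetricSpace Q] [CompactSpace Q] [ConnectedSpace Q]
    [LocallyConnectedSpace Q] [Nonempty Q] :
    ∃ g : ℝ → Q, Continuous g ∧ g '' (Icc 0 1) = univ := by
  classical
  obtain ⟨q₀⟩ := ‹Nonempty Q›
  obtain ⟨C, hC⟩ := Metric.isBounded_iff.1
    (Metric.isBounded_of_compactSpace (s := (univ : Set Q)))
  set R : ℝ := max C 0 + 1 with hR_def
  have hR1 : 1 ≤ R := by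
    have : (0:ℝ) ≤ max C 0 := le_max_right _ _
    rw [hR_def]; linarith
  have hR : ∀ x y : Q, dist x y < R := by
    intro x y
    have h1 : dist x y ≤ C := hC trivial trivial
    have h2 : C ≤ max C 0 := le_max_left _ _
    rw [hR_def]; linarith
  have hdelta : ∀ n : ℕ, ∃ d : ℝ, 0 < d ∧ d ≤ (2⁻¹ : ℝ)^(n+1) ∧
      ∀ a b : Q, dist a b < d → ∀ η > 0, ∃ l,
        ChainIn η (Metric.closedBall a ((2⁻¹:ℝ)^(n+1))) a b l := by
    intro n
    obtain ⟨d, hd, hch⟩ := @exists_good_delta Q _ _ _ _ ((2⁻¹:ℝ)^(n+1)) (by positivity)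
    exact ⟨min d ((2⁻¹:ℝ)^(n+1)), lt_min hd (by positivity), min_le_right _ _,
      fun a b hab η hη => hch a b (lt_of_lt_of_le hab (min_le_left _ _)) η hη⟩
  choose δ hδpos hδle hδchain using hdelta
  set ρ : ℕ → ℝ := fun n => if n = 0 then R else δ n with hρ_def
  set B : ℕ → ℝ := fun n => if n = 0 then R else (2⁻¹:ℝ)^(n+1) with hB_def
  have hBpos : ∀ n, 0 ≤ B n := by
    intro n; rw [hB_def]; dsimp only
    split
    · linarith
    · positivity
  have hnet : ∀ η : ℝ, 0 < η → ∃ L : List Q, ∀ p : Q, ∃ w ∈ L, dist p w < η := by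
    intro η hη
    obtain ⟨t, -, htfin, hcov⟩ := finite_cover_balls_of_compact
      (isCompact_univ : IsCompact (univ : Set Q)) hη
    refine ⟨htfin.toFinset.toList, fun p => ?_⟩
    obtain ⟨w, hw, hpw⟩ := mem_iUnion₂.1 (hcov (mem_univ p))
    exact ⟨w, by rw [Finset.mem_toList, Set.Finite.mem_toFinset]; exact hw,
      by simpa [Metric.mem_ball] using hpw⟩
  set Good : ℕ → ℕ × (ℕ → Q) → Prop := fun n pr =>
    0 < pr.1 ∧ (∀ i, dist (pr.2 i) (pr.2 (i+1)) < δ n) ∧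
      (∀ i, pr.1 ≤ i → pr.2 i = pr.2 pr.1) ∧
      (∀ q : Q, ∃ j ≤ pr.1, dist q (pr.2 j) < ρ n) with hGood_def
  have hstep : ∀ n (pr : ℕ × (ℕ → Q)), Good n pr → ∃ pr' : ℕ × (ℕ → Q), Good (n+1) pr' ∧
      ∃ M : ℕ, 0 < M ∧ pr'.1 = pr.1 * M ∧ (∀ j, pr'.2 (j * M) = pr.2 j) ∧
        (∀ i, dist (pr'.2 i) (pr.2 (i / M)) ≤ B n + δ n) := by
    rintro n ⟨N, v⟩ ⟨hN, hmesh, htail, hdens⟩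
    obtain ⟨net, hnet'⟩ := hnet (δ (n+1)) (hδpos (n+1))
    have hmain : ∀ a b : Q, dist a b < δ n →
        ∃ l, ChainIn (δ (n+1)) (Metric.closedBall a (B n)) a b l := by
      intro a b hab
      obtain ⟨l, hl⟩ := hδchain n a b hab (δ (n+1)) (hδpos (n+1))
      refine ⟨l, hl.mono (Metric.closedBall_subset_closedBall ?_)⟩
      rw [hB_def]; dsimp only
      split
      · have h1 : (2⁻¹:ℝ)^(n+1) ≤ 1 := by
          apply pow_le_one₀ <;> norm_num
        linarith
      · exact le_refl _
    have hdet : ∀ c w : Q, dist w c < ρ n →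
        ∃ l, ChainIn (δ (n+1)) (Metric.closedBall c (B n)) c c l ∧ w ∈ l := by
      intro c w hwc
      have hmem_of_chain : ∀ (l : List Q), l.getLast? = some w → w ∈ l := by
        intro l hl
        obtain ⟨hne, heq⟩ := List.mem_getLast?_eq_getLast (Option.mem_def.2 hl)
        rw [heq]
        exact List.getLast_mem hne
      by_cases hn : n = 0
      · subst hn
        obtain ⟨l, hl⟩ := (isPreconnected_univ (α := Q)).chainIn
          (mem_univ c) (mem_univ w) (hδpos 1)
        have hl' : ChainIn (δ 1) (Metric.closedBall c (B 0)) c w l := by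
          refine hl.mono (fun x _ => ?_)
          rw [hB_def]; simp only [if_pos rfl, Metric.mem_closedBall]
          exact (hR x c).le
        exact ⟨l ++ l.reverse, hl'.append (hδpos 1) hl'.reverse,
          List.mem_append.2 (Or.inl (hmem_of_chain l hl'.2.2.1))⟩
      · have hwc' : dist c w < δ n := by
          rw [dist_comm]
          have : ρ n = δ n := by rw [hρ_def]; simp [hn]
          rwa [this] at hwc
        obtain ⟨l, hl⟩ := hδchain n c w hwc' (δ (n+1)) (hδpos (n+1))
        have hl' : ChainIn (δ (n+1)) (Metric.closedBall c (B n)) c w l := by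
          have : B n = (2⁻¹:ℝ)^(n+1) := by rw [hB_def]; simp [hn]
          rwa [this]
        exact ⟨l ++ l.reverse, hl'.append (hδpos (n+1)) hl'.reverse,
          List.mem_append.2 (Or.inl (hmem_of_chain l hl'.2.2.1))⟩
    obtain ⟨M, hM, v', h1, h2, h3, h4, h5⟩ := step_lemma (hδpos (n+1)) (hBpos n) (hδpos n)
      N v hN hmesh htail hdens hmain hdet net hnet'
    refine ⟨(N * M, v'), ⟨Nat.mul_pos hN hM, h1, h2, ?_⟩, M, hM, rfl, h3, h4⟩
    intro q
    obtain ⟨j, hj, hq⟩ := h5 q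
    refine ⟨j, hj, ?_⟩
    have : ρ (n+1) = δ (n+1) := by rw [hρ_def]; simp
    rwa [this]
  -- the tower
  set base : ℕ × (ℕ → Q) := (1, fun _ => q₀) with hbase_def
  have hbase : Good 0 base := by
    refine ⟨one_pos, by simpa [hbase_def] using (hδpos 0), fun i _ => rfl, fun q => ⟨0, zero_le_one, ?_⟩⟩
    have hr0 : ρ 0 = R := by simp [hρ_def]
    rw [hr0]; exact hR q q₀
  set next : ℕ → ℕ × (ℕ → Q) → ℕ × (ℕ → Q) :=
    fun n pr => if h : Good n pr then (hstep n pr h).choose else pr with hnext_def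
  set T : ℕ → ℕ × (ℕ → Q) := fun n => Nat.rec base (fun n ih => next n ih) n with hT_def
  have hTs : ∀ n, T (n+1) = next n (T n) := fun n => rfl
  have hGoodT : ∀ n, Good n (T n) := by
    intro n
    induction n with
    | zero => exact hbase
    | succ n ih =>
      rw [hTs n, hnext_def]; dsimp only
      rw [dif_pos ih]
      exact (hstep n (T n) ih).choose_spec.1
  have hLinkT : ∀ n, ∃ M, 0 < M ∧ (T (n+1)).1 = (T n).1 * M ∧
      (∀ j, (T (n+1)).2 (j * M) = (T n).2 j) ∧
      (∀ i, dist ((T (n+1)).2 i) ((T n).2 (i / M)) ≤ B n + δ n) := by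
    intro n
    have heq : T (n+1) = (hstep n (T n) (hGoodT n)).choose := by
      rw [hTs n, hnext_def]; dsimp only
      rw [dif_pos (hGoodT n)]
    rw [heq]
    exact (hstep n (T n) (hGoodT n)).choose_spec.2
  choose MM hMMpos hNNs hgrid hclose using hLinkT
  obtain ⟨NN, hNNdef⟩ : ∃ NN : ℕ → ℕ, ∀ n, NN n = (T n).1 :=
    ⟨fun n => (T n).1, fun _ => rfl⟩
  obtain ⟨vv, hvvdef⟩ : ∃ vv : ℕ → ℕ → Q, ∀ n, vv n = (T n).2 :=
    ⟨fun n => (T n).2, fun _ => rfl⟩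
  have hNNs' : ∀ n, NN (n+1) = NN n * MM n := by
    intro n; rw [hNNdef, hNNdef]; exact hNNs n
  have hgrid' : ∀ n j, vv (n+1) (j * MM n) = vv n j := by
    intro n j; rw [hvvdef, hvvdef]; exact hgrid n j
  have hclose' : ∀ n i, dist (vv (n+1) i) (vv n (i / MM n)) ≤ B n + δ n := by
    intro n i; rw [hvvdef, hvvdef]; exact hclose n i
  have hNpos : ∀ n, 0 < NN n := by intro n; rw [hNNdef]; exact (hGoodT n).1
  have hmeshv : ∀ n i, dist (vv n i) (vv n (i+1)) < δ n := by
    intro n; rw [hvvdef]; exact (hGoodT n).2.1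
  have hdensv : ∀ n (q : Q), ∃ j ≤ NN n, dist q (vv n j) < ρ n := by
    intro n; rw [hNNdef, hvvdef]; exact (hGoodT n).2.2.2
  -- approximations
  set u : ℝ → ℕ → Q := fun t n => vv n (⌊t * NN n⌋₊) with hu_def
  have hfloor : ∀ (t : ℝ) (n : ℕ), (⌊t * NN (n+1)⌋₊ : ℕ) / MM n = ⌊t * NN n⌋₊ := by
    intro t n
    rcases le_or_gt 0 t with ht | ht
    · have hMne : (MM n : ℝ) ≠ 0 := Nat.cast_ne_zero.2 (hMMpos n).ne'
      have hdiv : (t * NN (n+1)) / (MM n : ℝ) = t * NN n := by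
        rw [hNNs' n]; push_cast; field_simp
      rw [← Nat.floor_div_natCast, hdiv]
    · have h1 : t * NN (n+1) ≤ 0 :=
        mul_nonpos_of_nonpos_of_nonneg ht.le (Nat.cast_nonneg _)
      have h2 : t * NN n ≤ 0 :=
        mul_nonpos_of_nonpos_of_nonneg ht.le (Nat.cast_nonneg _)
      rw [Nat.floor_of_nonpos h1, Nat.floor_of_nonpos h2, Nat.zero_div]
  have hu_step : ∀ (t : ℝ) (n : ℕ), dist (u t n) (u t (n+1)) ≤ B n + δ n := by
    intro t n
    rw [dist_comm]
    have := hclose' n (⌊t * NN (n+1)⌋₊)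
    rwa [hfloor t n] at this
  have hBδ : ∀ n, B n + δ n ≤ (R + 1) * (2⁻¹:ℝ)^n := by
    intro n
    have hδn := hδle n
    have hpow : (2⁻¹:ℝ)^(n+1) = 2⁻¹ * (2⁻¹)^n := by ring
    have hpownn : (0:ℝ) ≤ (2⁻¹:ℝ)^n := by positivity
    rw [hB_def]; dsimp only
    split
    · rename_i hn
      subst hn
      simp only [pow_zero, mul_one]
      have : δ 0 ≤ (2⁻¹:ℝ)^(0+1) := hδle 0
      norm_num at this ⊢
      linarith
    · have h2 : δ n ≤ 2⁻¹ * (2⁻¹:ℝ)^n := by rw [← hpow]; exact hδn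
      have h3 : (2⁻¹:ℝ)^(n+1) = 2⁻¹ * (2⁻¹)^n := hpow
      have h4 : (1:ℝ) ≤ R + 1 := by linarith
      nlinarith [hpownn]
  have hgeom : ∀ t n, dist (u t n) (u t (n+1)) ≤ (R+1) * (2⁻¹:ℝ)^n :=
    fun t n => (hu_step t n).trans (hBδ n)
  have hlim : ∀ t : ℝ, ∃ a : Q, Tendsto (u t) atTop (𝓝 a) := by
    intro t
    have : CauchySeq (u t) := cauchySeq_of_le_geometric 2⁻¹ (R+1) (by norm_num) (hgeom t)
    exact cauchySeq_tendsto_of_complete this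
  choose f hf using hlim
  have hdistf : ∀ t n, dist (u t n) (f t) ≤ (R+1) * (2⁻¹:ℝ)^n / (1 - 2⁻¹) :=
    fun t n => dist_le_of_le_geometric_of_tendsto 2⁻¹ (R+1) (by norm_num) (hgeom t) (hf t) n
  have hdistf' : ∀ t n, dist (u t n) (f t) ≤ 2 * (R+1) * (2⁻¹:ℝ)^n := by
    intro t n
    have := hdistf t n
    have heq : (R+1) * (2⁻¹:ℝ)^n / (1 - 2⁻¹) = 2 * (R+1) * (2⁻¹:ℝ)^n := by
      field_simp; ring
    rwa [heq] at this
  -- adjacent index values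
  have hadj : ∀ n (a b : ℕ), a ≤ b → b ≤ a + 1 → dist (vv n a) (vv n b) ≤ δ n := by
    intro n a b hab hba
    rcases Nat.eq_or_lt_of_le hab with rfl | h
    · simp [(hδpos n).le]
    · have : b = a + 1 := by omega
      subst this
      exact (hmeshv n a).le
  have hfl1 : ∀ (x y : ℝ), x ≤ y + 1 → ⌊x⌋₊ ≤ ⌊y⌋₊ + 1 := by
    intro x y hxy
    rcases le_or_gt 0 y with hy | hy
    · calc ⌊x⌋₊ ≤ ⌊y + 1⌋₊ := Nat.floor_le_floor hxy
        _ = ⌊y⌋₊ + 1 := Nat.floor_add_one hy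
    · have hx1 : x < 1 := by linarith
      have : ⌊x⌋₊ = 0 := by
        rcases le_or_gt 0 x with hx | hx
        · exact Nat.floor_eq_zero.2 hx1
        · exact Nat.floor_of_nonpos hx.le
      omega
  -- continuity
  have hcont : Continuous f := by
    rw [Metric.continuous_iff]
    intro t ε hε
    obtain ⟨n, hn⟩ : ∃ n : ℕ, (4 * (R+1) + 1) * (2⁻¹:ℝ)^n < ε := by
      have hc : (0:ℝ) < 4 * (R+1) + 1 := by linarith
      obtain ⟨n, hn⟩ := exists_pow_lt_of_lt_one (div_pos hε hc) (by norm_num : (2⁻¹:ℝ) < 1)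
      exact ⟨n, by rwa [← lt_div_iff₀' hc]⟩
    have hNcast : (0:ℝ) < NN n := Nat.cast_pos.2 (hNpos n)
    refine ⟨1 / NN n, one_div_pos.2 hNcast, fun s hs => ?_⟩
    have hkey : dist (u s n) (u t n) ≤ δ n := by
      have habs : |s - t| < 1 / NN n := by
        rwa [Real.dist_eq] at hs
      have h1 : s * NN n ≤ t * NN n + 1 := by
        have := (abs_lt.1 habs).2
        have h2 : (s - t) * NN n ≤ 1 := by
          rw [← le_div_iff₀ hNcast] at *
          linarith [(abs_lt.1 habs).2]
        nlinarith
      have h2 : t * NN n ≤ s * NN n + 1 := by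
        have h2 : (t - s) * NN n ≤ 1 := by
          rw [← le_div_iff₀ hNcast] at *
          linarith [(abs_lt.1 habs).1]
        nlinarith
      have hf1 := hfl1 _ _ h1
      have hf2 := hfl1 _ _ h2
      rcases le_total (⌊s * NN n⌋₊) (⌊t * NN n⌋₊) with h | h
      · exact hadj n _ _ h hf2
      · rw [dist_comm]
        exact hadj n _ _ h hf1
    have hd1 := hdistf' s n
    have hd2 := hdistf' t n
    have hδn : δ n ≤ (2⁻¹:ℝ)^n := le_trans (hδle n)
      (by
        have : (2⁻¹:ℝ)^(n+1) ≤ (2⁻¹)^n := by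
          apply pow_le_pow_of_le_one <;> norm_num
        exact this)
    calc dist (f s) (f t) ≤ dist (f s) (u s n) + dist (u s n) (u t n) + dist (u t n) (f t) :=
          dist_triangle4 _ _ _ _
      _ ≤ 2 * (R+1) * (2⁻¹:ℝ)^n + δ n + 2 * (R+1) * (2⁻¹:ℝ)^n := by
          rw [dist_comm (f s) (u s n)]
          gcongr
      _ ≤ (4 * (R+1) + 1) * (2⁻¹:ℝ)^n := by
          have : (0:ℝ) ≤ (2⁻¹:ℝ)^n := by positivity
          nlinarith
      _ < ε := hn
  -- values at grid points
  have hgridlim : ∀ n (j : ℕ), j ≤ NN n → f ((j : ℝ) / NN n) = vv n j := by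
    intro n j hj
    set t : ℝ := (j : ℝ) / NN n with ht_def
    have hNcast : (0:ℝ) < NN n := Nat.cast_pos.2 (hNpos n)
    have hkey : ∀ m : ℕ, ∃ k : ℕ, t * NN (n + m) = (k : ℝ) ∧ vv (n + m) k = vv n j := by
      intro m
      induction m with
      | zero =>
        refine ⟨j, ?_, rfl⟩
        rw [ht_def]; field_simp; simp
      | succ m ih =>
        obtain ⟨k, hk1, hk2⟩ := ih
        refine ⟨k * MM (n + m), ?_, ?_⟩
        · have : (NN (n + m + 1) : ℝ) = (NN (n + m) : ℝ) * (MM (n + m) : ℝ) := by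
            rw [hNNs' (n + m)]; push_cast; ring
          rw [show n + (m + 1) = n + m + 1 by ring, this, ← mul_assoc, hk1]
          push_cast; ring
        · rw [show n + (m + 1) = n + m + 1 by ring, hgrid' (n + m) k, hk2]
    have heven : ∀ m : ℕ, n ≤ m → u t m = vv n j := by
      intro m hm
      obtain ⟨k, hk1, hk2⟩ := hkey (m - n)
      rw [show n + (m - n) = m by omega] at hk1 hk2
      rw [hu_def]; dsimp only
      rw [hk1, Nat.floor_natCast, hk2]
    have htend : Tendsto (u t) atTop (𝓝 (vv n j)) := by
      apply Tendsto.congr' _ tendsto_const_nhds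
      filter_upwards [eventually_ge_atTop n] with m hm
      exact (heven m hm).symm
    exact tendsto_nhds_unique (hf t) htend
  -- surjectivity
  refine ⟨f, hcont, ?_⟩
  have himgc : IsClosed (f '' Icc 0 1) := (isCompact_Icc.image hcont).isClosed
  rw [eq_univ_iff_forall]
  intro q
  rw [← himgc.closure_eq]
  rw [Metric.mem_closure_iff]
  intro ε hε
  obtain ⟨n, hn⟩ : ∃ n : ℕ, n ≠ 0 ∧ (2⁻¹:ℝ)^(n+1) < ε := by
    obtain ⟨n, hn⟩ := exists_pow_lt_of_lt_one hε (by norm_num : (2⁻¹:ℝ) < 1)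
    refine ⟨n + 1, by omega, lt_of_le_of_lt ?_ hn⟩
    apply pow_le_pow_of_le_one (by norm_num) (by norm_num) (by omega)
  obtain ⟨hn0, hnε⟩ := hn
  obtain ⟨j, hj, hq⟩ := hdensv n q
  have hNcast : (0:ℝ) < NN n := Nat.cast_pos.2 (hNpos n)
  refine ⟨f ((j:ℝ) / NN n), ⟨(j:ℝ)/NN n, ⟨by positivity, ?_⟩, rfl⟩, ?_⟩
  · rw [div_le_one hNcast]
    exact_mod_cast hj
  · rw [hgridlim n j hj]
    have : ρ n = δ n := by rw [hρ_def]; simp [hn0]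
    rw [this] at hq
    calc dist q (vv n j) < δ n := hq
      _ ≤ (2⁻¹:ℝ)^(n+1) := hδle n
      _ < ε := hnε

end Peano

section Main

lemma comp_nil {X : Type*} : Comp ([] : List (X → X)) = id := rfl

lemma comp_cons {X : Type*} (f : X → X) (l : List (X → X)) :
    Comp (f :: l) = f ∘ Comp l := rfl

lemma comp_append {X : Type*} (l₁ l₂ : List (X → X)) :
    Comp (l₁ ++ l₂) = Comp l₁ ∘ Comp l₂ := by
  induction l₁ with
  | nil => rfl
  | cons f l ih =>
    simp only [List.cons_append, comp_cons, ih]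
    rfl

theorem stmt13 {X : Type*} [MetricSpace X] [CompactSpace X] [ConnectedSpace X]
    [LocallyConnectedSpace X] (A U : Set X) (F : Set (X → X))
    (hAF : TopFractalOn F A)
    (hUA : U ⊆ A) (hUne : U.Nonempty) (hUneq : U ≠ A)
    (hUopen : ∃ V : Set X, IsOpen V ∧ U = A ∩ V)
    (hconst : ∀ f ∈ F, ∃ c : X, ∀ x ∈ A \ U, f x = c)
    (hP : ∃ (n : ℕ) (P : Fin n → Set X), (∀ i, IsPeanoOn (P i)) ∧
      Set.univ \ A ⊆ (⋃ i, P i) ∧ (⋃ i, P i) ⊆ Set.univ \ U) :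
    ∃ G : Set (X → X), TopFractal G := by
  classical
  obtain ⟨hAcomp, hFfin, hFmaps, hFunion, hFcontr⟩ := hAF
  obtain ⟨V, hVopen, hUV⟩ := hUopen
  obtain ⟨n, P, hPpeano, hPcover, hPdisj⟩ := hP
  obtain ⟨u, hu⟩ := hUne
  have hAne : A.Nonempty := ⟨u, hUA hu⟩
  have hAU : (A \ U).Nonempty := by
    rw [Set.sdiff_nonempty]
    intro h
    exact hUneq (Set.Subset.antisymm hUA h)
  obtain ⟨a', ha'A, ha'U⟩ := hAU
  have hPcomp : IsCompact (⋃ i, P i) := isCompact_iUnion (fun i => (hPpeano i).1)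
  -- U is open in X
  have hUopen' : IsOpen U := by
    have hWA : (⋃ i, P i)ᶜ ⊆ A := by
      intro x hx
      by_contra hxA
      exact hx (hPcover ⟨mem_univ x, hxA⟩)
    have hUW : U ⊆ (⋃ i, P i)ᶜ := by
      intro x hxU hxP
      exact (hPdisj hxP).2 hxU
    have hUeq : U = V ∩ (⋃ i, P i)ᶜ := by
      apply Set.Subset.antisymm
      · intro x hx
        exact ⟨(hUV ▸ hx).2, hUW hx⟩
      · rintro x ⟨hxV, hxW⟩
        rw [hUV]
        exact ⟨hWA hxW, hxV⟩
    rw [hUeq]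
    exact hVopen.inter hPcomp.isClosed.isOpen_compl
  obtain ⟨ε₀, hε₀, hball⟩ := Metric.isOpen_iff.1 hUopen' u hu
  -- the collapsing map p : X → [0,1]
  set p : X → ℝ := fun x => max 0 (1 - dist x u / ε₀) with hp_def
  have hpcont : Continuous p := by
    apply continuous_const.max
    exact continuous_const.sub ((continuous_id.dist continuous_const).div_const ε₀)
  have hp01 : ∀ x, p x ∈ Icc (0:ℝ) 1 := by
    intro x
    constructor
    · exact le_max_left _ _
    · apply max_le (by norm_num)
      have : 0 ≤ dist x u / ε₀ := div_nonneg dist_nonneg hε₀.le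
      linarith
  have hpu : p u = 1 := by
    rw [hp_def]; simp
  have hp0 : ∀ x ∉ U, p x = 0 := by
    intro x hx
    have h1 : ε₀ ≤ dist x u := by
      by_contra h
      push_neg at h
      exact hx (hball (Metric.mem_ball.2 h))
    have h2 : (1 : ℝ) ≤ dist x u / ε₀ := (one_le_div hε₀).2 h1
    rw [hp_def]
    simp only
    rw [max_eq_left (by linarith)]
  have hpimg : p '' univ = Icc 0 1 := by
    apply Set.Subset.antisymm
    · rintro y ⟨x, -, rfl⟩
      exact hp01 x
    · have hIcc : Icc (p a') (p u) ⊆ range p := intermediate_value_univ a' u hpcont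
      rw [hp0 a' ha'U, hpu] at hIcc
      intro y hy
      obtain ⟨x, hx⟩ := hIcc hy
      exact ⟨x, mem_univ x, hx⟩
  -- the maps onto the Peano continua P i
  have hφex : ∀ i : Fin n, ∃ φ : X → X, Continuous φ ∧ φ '' univ = P i ∧
      (∀ x, x ∉ U → ∀ y, y ∉ U → φ x = φ y) := by
    intro i
    obtain ⟨hPc, hPconn, hPlc⟩ := hPpeano i
    haveI : CompactSpace (P i) := isCompact_iff_compactSpace.mp hPc
    haveI : ConnectedSpace (P i) := Subtype.connectedSpace hPconn
    haveI : Nonempty (P i) := hPconn.nonempty.to_subtype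
    obtain ⟨g, hgc, hgim⟩ := peano_surj (P i)
    refine ⟨fun x => (g (p x) : X), continuous_subtype_val.comp (hgc.comp hpcont), ?_, ?_⟩
    · have h1 : (fun x => (g (p x) : X)) '' univ =
          Subtype.val '' (g '' (p '' univ)) := by
        rw [Set.image_image, Set.image_image]
      rw [h1, hpimg, hgim, Subtype.coe_image_univ]
    · intro x hx y hy
      show (g (p x) : X) = (g (p y) : X)
      rw [hp0 x hx, hp0 y hy]
  choose φ hφcont hφim hφconst using hφex
  -- extensions of the maps in F
  have hextex : ∀ f, f ∈ F → ∃ g : X → X, Continuous g ∧ (∀ x ∈ A, g x = f x) ∧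
      (∀ x : X, g x ∈ f '' A) ∧ (∀ x, x ∉ U → ∀ y, y ∉ U → g x = g y) := by
    intro f hf
    obtain ⟨c, hc⟩ := hconst f hf
    set g : X → X := fun x => if x ∈ A then f x else c with hg_def
    have hgA : ∀ x ∈ A, g x = f x := fun x hx => if_pos hx
    have hgc : ∀ x, x ∉ U → g x = c := by
      intro x hx
      by_cases hxA : x ∈ A
      · rw [hgA x hxA]
        exact hc x ⟨hxA, hx⟩
      · exact if_neg hxA
    have hcfA : c ∈ f '' A := ⟨a', ha'A, hc a' ⟨ha'A, ha'U⟩⟩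
    have hgcont : Continuous g := by
      rw [continuous_iff_isClosed]
      intro s hs
      have hA_closed : IsClosed A := hAcomp.isClosed
      have h1 : g ⁻¹' s = (A ∩ f ⁻¹' s) ∪ (Uᶜ ∩ g ⁻¹' s) := by
        ext x
        constructor
        · intro hx
          by_cases hxU : x ∈ U
          · left
            refine ⟨hUA hxU, ?_⟩
            rw [Set.mem_preimage, ← hgA x (hUA hxU)]
            exact hx
          · right; exact ⟨hxU, hx⟩
        · rintro (⟨hxA, hxs⟩ | ⟨hxU, hxs⟩)
          · rw [Set.mem_preimage, hgA x hxA]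
            exact hxs
          · exact hxs
      rw [h1]
      apply IsClosed.union
      · exact ((hFmaps f hf).1).preimage_isClosed_of_isClosed hA_closed hs
      · by_cases hcs : c ∈ s
        · have h2 : Uᶜ ∩ g ⁻¹' s = Uᶜ := by
            apply Set.Subset.antisymm Set.inter_subset_left
            intro x hx
            refine ⟨hx, ?_⟩
            rw [Set.mem_preimage, hgc x hx]
            exact hcs
          rw [h2]
          exact hUopen'.isClosed_compl
        · have h2 : Uᶜ ∩ g ⁻¹' s = ∅ := by
            rw [Set.eq_empty_iff_forall_notMem]
            rintro x ⟨hxU, hxs⟩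
            rw [Set.mem_preimage, hgc x hxU] at hxs
            exact hcs hxs
          rw [h2]
          exact isClosed_empty
    have hgim : ∀ x : X, g x ∈ f '' A := by
      intro x
      by_cases hxA : x ∈ A
      · rw [hgA x hxA]
        exact ⟨x, hxA, rfl⟩
      · have hgx : g x = c := if_neg hxA
        rw [hgx]
        exact hcfA
    refine ⟨g, hgcont, hgA, hgim, ?_⟩
    intro x hx y hy
    rw [hgc x hx, hgc y hy]
  choose! E hEcont hEA hEim hEconst using hextex
  set G : Set (X → X) := (fun f => E f) '' F ∪ Set.range φ with hG_def
  have hfA_sub : ∀ f ∈ F, f '' A ⊆ A := fun f hf => (hFmaps f hf).2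
  -- key: all maps in G are constant off U
  have hGconst : ∀ g ∈ G, ∀ x, x ∉ U → ∀ y, y ∉ U → g x = g y := by
    intro g hg
    rcases hg with ⟨f, hf, rfl⟩ | ⟨i, rfl⟩
    · exact hEconst f hf
    · exact hφconst i
  -- key: words of E-maps contract into A
  have hkey : ∀ t : List (X → X), t ≠ [] → (∀ g ∈ t, g ∈ (fun f => E f) '' F) →
      ∃ fs : List (X → X), fs.length = t.length ∧ (∀ f ∈ fs, f ∈ F) ∧
        Comp t '' univ ⊆ Comp fs '' A ∧ Comp fs '' A ⊆ A := by
    intro t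
    induction t with
    | nil => intro h; exact absurd rfl h
    | cons g t ih =>
      intro _hne hmem
      obtain ⟨f, hf, rfl⟩ := hmem g (by simp)
      by_cases ht : t = []
      · subst ht
        refine ⟨[f], rfl, by simpa using hf, ?_, ?_⟩
        · rintro y ⟨x, -, rfl⟩
          exact hEim f hf (Comp [] x)
        · rintro y ⟨x, hx, rfl⟩
          exact hfA_sub f hf ⟨x, hx, rfl⟩
      · obtain ⟨fs, hlen, hfsF, hsub, hsubA⟩ := ih ht (fun g' hg' => hmem g' (by simp [hg']))
        refine ⟨f :: fs, by simp [hlen], ?_, ?_, ?_⟩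
        · intro f' hf'
          rcases List.mem_cons.1 hf' with rfl | hf'
          · exact hf
          · exact hfsF f' hf'
        · rintro y ⟨x, -, rfl⟩
          have h1 : Comp t x ∈ Comp fs '' A := hsub ⟨x, mem_univ x, rfl⟩
          have h2 : Comp t x ∈ A := hsubA h1
          obtain ⟨z, hz, hz2⟩ := h1
          refine ⟨z, hz, ?_⟩
          show f (Comp fs z) = E f (Comp t x)
          rw [hz2, hEA f hf _ h2]
        · rintro y ⟨x, hx, rfl⟩
          rw [comp_cons]
          have h1 : Comp fs x ∈ A := hsubA ⟨x, hx, rfl⟩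
          exact hfA_sub f hf ⟨Comp fs x, h1, rfl⟩
  -- F-words map A into A
  have htrim : ∀ fs : List (X → X), (∀ f ∈ fs, f ∈ F) → Comp fs '' A ⊆ A := by
    intro fs
    induction fs with
    | nil => intro _; simp [comp_nil]
    | cons f fs ih =>
      intro hmem
      rintro y ⟨x, hx, rfl⟩
      rw [comp_cons]
      have h1 : Comp fs x ∈ A := ih (fun f' hf' => hmem f' (by simp [hf'])) ⟨x, hx, rfl⟩
      exact hfA_sub f (hmem f (by simp)) ⟨Comp fs x, h1, rfl⟩
  have htake : ∀ (fs : List (X → X)) (N : ℕ), (∀ f ∈ fs, f ∈ F) →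
      Comp fs '' A ⊆ Comp (fs.take N) '' A := by
    intro fs N hmem
    have hdecomp : fs = fs.take N ++ fs.drop N := (List.take_append_drop N fs).symm
    rintro y ⟨x, hx, rfl⟩
    have : Comp fs x = Comp (fs.take N) (Comp (fs.drop N) x) := by
      conv_lhs => rw [hdecomp]
      rw [comp_append]; rfl
    rw [this]
    refine ⟨Comp (fs.drop N) x, ?_, rfl⟩
    exact htrim (fs.drop N) (fun f hf => hmem f (List.mem_of_mem_drop hf)) ⟨x, hx, rfl⟩
  refine ⟨G, ?_, ?_, ?_, ?_⟩
  · exact (hFfin.image _).union (Set.finite_range φ)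
  · intro g hg
    rcases hg with ⟨f, hf, rfl⟩ | ⟨i, rfl⟩
    · exact hEcont f hf
    · exact hφcont i
  · -- union of ranges is everything
    rw [Set.eq_univ_iff_forall]
    intro x
    rw [Set.mem_iUnion₂]
    by_cases hxA : x ∈ A
    · rw [← hFunion] at hxA
      obtain ⟨s, ⟨f, rfl⟩, hxs⟩ := hxA
      simp only [Set.mem_iUnion] at hxs
      obtain ⟨hf, y, hyA, hyx⟩ := hxs
      refine ⟨E f, Or.inl ⟨f, hf, rfl⟩, y, ?_⟩
      rw [hEA f hf y hyA, hyx]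
    · have hx : x ∈ ⋃ i, P i := hPcover ⟨mem_univ x, hxA⟩
      obtain ⟨s, ⟨i, rfl⟩, hxs⟩ := hx
      have hxPi : x ∈ P i := hxs
      rw [← hφim i] at hxPi
      obtain ⟨y, -, hyx⟩ := hxPi
      exact ⟨φ i, Or.inr ⟨i, rfl⟩, y, hyx⟩
  · -- topological contractivity
    intro 𝒰 h𝒰open h𝒰cover
    obtain ⟨r, hr, hleb⟩ := lebesgue_number_lemma_of_metric_sUnion
      (isCompact_univ : IsCompact (univ : Set X)) h𝒰open h𝒰cover
    have hunif : ∃ d > (0:ℝ), ∀ i : Fin n, ∀ x y : X, dist x y < d →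
        dist (φ i x) (φ i y) < r := by
      have huc : ∀ i : Fin n, ∃ d > (0:ℝ), ∀ x y : X, dist x y < d →
          dist (φ i x) (φ i y) < r := by
        intro i
        have := Metric.uniformContinuous_iff.1
          (CompactSpace.uniformContinuous_of_continuous (hφcont i)) r hr
        obtain ⟨d, hd, hdp⟩ := this
        exact ⟨d, hd, fun x y h => hdp h⟩
      choose d hd hdp using huc
      rcases isEmpty_or_nonempty (Fin n) with h | h
      · exact ⟨1, one_pos, fun i => isEmptyElim i⟩
      · haveI := h
        refine ⟨Finset.univ.inf' (Finset.univ_nonempty) d, ?_, ?_⟩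
        · exact (Finset.lt_inf'_iff _).2 (fun i _ => hd i)
        · intro i x y hxy
          exact hdp i x y (lt_of_lt_of_le hxy (Finset.inf'_le _ (Finset.mem_univ i)))
    obtain ⟨d, hdpos, hdprop⟩ := hunif
    set ρ : ℝ := min r d with hρ_def
    have hρpos : 0 < ρ := lt_min hr hdpos
    set 𝒱 : Set (Set X) := Set.range (fun x : X => Metric.ball x ρ) with h𝒱_def
    obtain ⟨N, hN⟩ := hFcontr 𝒱 (by rintro s ⟨x, rfl⟩; exact Metric.isOpen_ball)
      (fun x _ => ⟨Metric.ball x ρ, ⟨x, rfl⟩, Metric.mem_ball_self hρpos⟩)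
    refine ⟨N + 2, ?_⟩
    intro l hlen hlG
    obtain ⟨g₀, tail, rfl⟩ : ∃ g₀ tail, l = g₀ :: tail := by
      cases l with
      | nil => simp at hlen
      | cons a t => exact ⟨a, t, rfl⟩
    have htail_len : tail.length = N + 1 := by simpa using hlen
    by_cases hφtail : ∃ gp ∈ tail, gp ∈ Set.range φ
    · -- singleton case
      obtain ⟨gp, hgp_tail, i, rfl⟩ := hφtail
      obtain ⟨t₁, t₂, rfl⟩ := List.append_of_mem hgp_tail
      obtain ⟨L₁, gprev, hsplit, hgprevG⟩ :
          ∃ (L₁ : List (X → X)) (gprev : X → X),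
            g₀ :: (t₁ ++ φ i :: t₂) = L₁ ++ gprev :: φ i :: t₂ ∧ gprev ∈ G := by
        rcases List.eq_nil_or_concat t₁ with rfl | ⟨t₁', gprev, rfl⟩
        · exact ⟨[], g₀, by simp, hlG g₀ (by simp)⟩
        · refine ⟨g₀ :: t₁', gprev, by simp, ?_⟩
          exact hlG gprev (by simp)
      rw [hsplit]
      set w₀ : X := Comp L₁ (gprev (φ i u)) with hw₀_def
      obtain ⟨Uu, hUu, hw₀Uu⟩ := h𝒰cover (mem_univ w₀)
      refine ⟨Uu, hUu, ?_⟩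
      rintro y ⟨x, -, rfl⟩
      have hccc : Comp (L₁ ++ gprev :: φ i :: t₂) x
          = Comp L₁ (gprev (φ i (Comp t₂ x))) := by
        rw [comp_append, comp_cons, comp_cons]
        rfl
      have hnotU : ∀ z : X, φ i z ∉ U := by
        intro z
        have h1 : φ i z ∈ P i := by
          rw [← hφim i]; exact ⟨z, mem_univ z, rfl⟩
        have h2 : φ i z ∈ ⋃ j, P j := Set.mem_iUnion.2 ⟨i, h1⟩
        exact (hPdisj h2).2
      have heq : gprev (φ i (Comp t₂ x)) = gprev (φ i u) :=
        hGconst gprev hgprevG _ (hnotU _) _ (hnotU _)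
      rw [hccc, heq, ← hw₀_def]
      exact hw₀Uu
    · -- all maps in the tail are extended F-maps
      push_neg at hφtail
      have htailE : ∀ g ∈ tail, g ∈ (fun f => E f) '' F := by
        intro g hg
        rcases hlG g (by simp [hg]) with h | h
        · exact h
        · exact absurd h (hφtail g hg)
      have htailne : tail ≠ [] := by
        intro h
        rw [h] at htail_len
        simp at htail_len
      by_cases hg₀ : g₀ ∈ Set.range φ
      · obtain ⟨i, rfl⟩ := hg₀
        obtain ⟨fs, hfslen, hfsF, hsub, -⟩ := hkey tail htailne htailE
        have hfstake : (fs.take N).length = N := by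
          rw [List.length_take, hfslen, htail_len]
          omega
        obtain ⟨Vb, hVb, hVsub⟩ := hN (fs.take N) hfstake
          (fun f hf => hfsF f (List.mem_of_mem_take hf))
        obtain ⟨x₀, rfl⟩ := hVb
        obtain ⟨Uu, hUu, hUusub⟩ := hleb (φ i x₀) (mem_univ _)
        refine ⟨Uu, hUu, ?_⟩
        rintro y ⟨x, -, rfl⟩
        rw [comp_cons, Function.comp_apply]
        apply hUusub
        have h1 : Comp tail x ∈ Metric.ball x₀ ρ :=
          hVsub (htake fs N hfsF (hsub ⟨x, mem_univ x, rfl⟩))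
        rw [Metric.mem_ball] at h1 ⊢
        exact hdprop i _ _ (lt_of_lt_of_le h1 (min_le_right r d))
      · have hg₀E : g₀ ∈ (fun f => E f) '' F := by
          rcases hlG g₀ (by simp) with h | h
          · exact h
          · exact absurd h hg₀
        obtain ⟨fs, hfslen, hfsF, hsub, -⟩ := hkey (g₀ :: tail) (by simp)
          (by
            intro g hg
            rcases List.mem_cons.1 hg with rfl | hg
            · exact hg₀E
            · exact htailE g hg)
        have hfstake : (fs.take N).length = N := by
          rw [List.length_take, hfslen]
          simp only [List.length_cons, htail_len]
          omega
        obtain ⟨Vb, hVb, hVsub⟩ := hN (fs.take N) hfstake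
          (fun f hf => hfsF f (List.mem_of_mem_take hf))
        obtain ⟨x₀, rfl⟩ := hVb
        obtain ⟨Uu, hUu, hUusub⟩ := hleb x₀ (mem_univ _)
        refine ⟨Uu, hUu, ?_⟩
        intro y hy
        apply hUusub
        have h1 : y ∈ Metric.ball x₀ ρ := hVsub (htake fs N hfsF (hsub hy))
        rw [Metric.mem_ball] at h1 ⊢
        exact lt_of_lt_of_le h1 (min_le_left r d)

end Main

end
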